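/- Let a_pes, a_cen : H → [0,∞) be functions on a finite set H, let m = (1/|H|)·Σ_h a_cen(h) - 1/2, and let z > m be a constant with z ≥ max_h a_cen(h). Define A(h) = 1/2 + (m + a_pes(h) - a_cen(h))/(2(z - m)). Then (1/|H|)·Σ_h A(h) > 1/2 if and only if (1/|H|)·Σ_h a_pes(h) > 1/2. -/
import Mathlib

/-- The census comparison assorter
`A h = 1/2 + (m + a_pes h - a_cen h)/(2(z - m))`, with `m` the census margin and
`z > m`, `z ≥ max_h a_cen h`, has mean exceeding `1/2` iff the PES assorter `a_pes`
has mean exceeding `1/2`. -/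
theorem census_comparison_assorter_iff {H : Type*} [Fintype H] [Nonempty H]
    (apes acen : H → ℝ) (hpes : ∀ h, 0 ≤ apes h) (hcen : ∀ h, 0 ≤ acen h)
    (m z : ℝ)
    (hm : m = (1 / (Fintype.card H : ℝ)) * (∑ h, acen h) - 1 / 2)
    (hz1 : m < z) (hz2 : ∀ h, acen h ≤ z)
    (A : H → ℝ)
    (hA : ∀ h, A h = 1 / 2 + (m + apes h - acen h) / (2 * (z - m))) :
    (1 / (Fintype.card H : ℝ)) * (∑ h, A h) > 1 / 2 ↔
      (1 / (Fintype.card H : ℝ)) * (∑ h, apes h) > 1 / 2 := by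
  have hn : (0:ℝ) < (Fintype.card H : ℝ) := by
    exact_mod_cast Fintype.card_pos
  have hzm : (0:ℝ) < 2 * (z - m) := by linarith
  have hsum : ∑ h, A h = (Fintype.card H : ℝ) * (1/2)
      + ((Fintype.card H : ℝ) * m + ∑ h, apes h - ∑ h, acen h) / (2 * (z - m)) := by
    simp only [hA, div_eq_mul_inv]
    rw [Finset.sum_add_distrib]
    have hinner : ∑ x : H, ((m + apes x - acen x) * (2 * (z - m))⁻¹)
        = ((Fintype.card H : ℝ) * m + ∑ h, apes h - ∑ h, acen h) * (2 * (z - m))⁻¹ := by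
      rw [← Finset.sum_mul]
      congr 1
      rw [Finset.sum_sub_distrib, Finset.sum_add_distrib, Finset.sum_const,
        Finset.card_univ, nsmul_eq_mul]
    rw [hinner]
    simp [Finset.card_univ, mul_comm]
  have hkey : (Fintype.card H : ℝ) * m + ∑ h, apes h - ∑ h, acen h
      = ∑ h, apes h - (Fintype.card H : ℝ) * (1/2) := by
    rw [hm]; field_simp; ring
  have main : ∀ X : ℝ, (1/2 < 1/(Fintype.card H : ℝ) * ((Fintype.card H : ℝ) * (1/2) + X) ↔ 0 < X) := by
    intro X
    have e : 1/(Fintype.card H : ℝ) * ((Fintype.card H : ℝ) * (1/2)) = 1/2 := by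
      field_simp
    rw [mul_add, e, lt_add_iff_pos_right]
    constructor <;> intro h
    · nlinarith [one_div_pos.mpr hn]
    · have := mul_pos (one_div_pos.mpr hn) h; linarith
  rw [hsum, hkey]
  have hR : (1:ℝ)/(Fintype.card H : ℝ) * (∑ h, apes h)
      = 1/(Fintype.card H : ℝ) * ((Fintype.card H : ℝ) * (1/2) + (∑ h, apes h - (Fintype.card H : ℝ) * (1/2))) := by ring
  rw [gt_iff_lt, gt_iff_lt, main, hR, main, div_pos_iff]
  constructor
  · rintro (⟨h,_⟩|⟨_,h⟩) <;> linarith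
  · intro h; left; exact ⟨h, hzm⟩
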